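/- Let C be a d-dimensional copula with copula measure Q^C, let T : [0,1]^d → [0,1]^d map each vector to its nondecreasing rearrangement, and let C_T be the copula of the order transform. Then [C_T, C_T] = ∫_{[0,1]^d} Q^C[{v ∈ [0,1]^d : T(v) ≤ T(u)}] dQ^C(u), i.e., [C_T,C_T] equals the probability that T(V) ≤ T(U) coordinatewise for U, V independent with distribution Q^C. -/

import Mathlib

open MeasureTheory

/-- A copula measure: a probability measure on `[0,1]^d` (viewed inside
`Fin d → ℝ`) all of whose univariate marginals are uniform on `[0,1]`. -/
def IsCopulaMeasure {d : ℕ} (μ : Measure (Fin d → ℝ)) : Prop :=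
  IsProbabilityMeasure μ ∧
    ∀ i : Fin d, μ.map (fun x => x i) = volume.restrict (Set.Icc 0 1)

/-- The copula (distribution function) associated with a copula measure. -/
noncomputable def copulaFn {d : ℕ} (μ : Measure (Fin d → ℝ)) (u : Fin d → ℝ) : ℝ :=
  (μ {x | ∀ i, x i ≤ u i}).toReal

/-- The sorting (order statistic) map: `sortVec x` is the nondecreasing
rearrangement of the vector `x`. -/
noncomputable def sortVec {d : ℕ} (x : Fin d → ℝ) : Fin d → ℝ :=
  x ∘ Tuple.sort x

/-- The `i`-th univariate marginal distribution function of a measure on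
`Fin d → ℝ`. -/
noncomputable def margCDF {d : ℕ} (ρ : Measure (Fin d → ℝ)) (i : Fin d) (t : ℝ) : ℝ :=
  (ρ.map (fun x => x i) (Set.Iic t)).toReal

/-- `ν` is the copula measure of the order transform `C_T` of the copula
with copula measure `μ`: Sklar's identity `H^C_T = C_T ∘ (marginals of H^C_T)`
holds, where `H^C_T` is the distribution function of the image of `μ` under
the sorting map. -/
def IsOrderTransform {d : ℕ} (μ ν : Measure (Fin d → ℝ)) : Prop :=
  IsCopulaMeasure ν ∧
    ∀ x : Fin d → ℝ,
      ((μ.map sortVec) {y | ∀ i, y i ≤ x i}).toReal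
        = copulaFn ν (fun i => margCDF (μ.map sortVec) i (x i))

open Set
open scoped ENNReal

lemma measurableSet_sortEq {d : ℕ} (σ : Equiv.Perm (Fin d)) :
    MeasurableSet {x : Fin d → ℝ | σ = Tuple.sort x} := by
  have : {x : Fin d → ℝ | σ = Tuple.sort x}
      = (⋂ (i) (j), {x : Fin d → ℝ | i ≤ j → x (σ i) ≤ x (σ j)}) ∩
        (⋂ (i) (j), {x : Fin d → ℝ | (i < j ∧ ¬ σ i < σ j) → x (σ i) ≠ x (σ j)}) := by
    ext x
    simp only [mem_setOf_eq, mem_inter_iff, mem_iInter, Tuple.eq_sort_iff]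
    constructor
    · rintro ⟨hm, hs⟩
      refine ⟨fun i j hij => hm hij, fun i j ⟨hij, hσ⟩ he => hσ (hs i j hij he)⟩
    · rintro ⟨hm, hs⟩
      refine ⟨fun i j hij => hm i j hij, fun i j hij he => ?_⟩
      by_contra hσ
      exact hs i j ⟨hij, hσ⟩ he
  rw [this]
  refine MeasurableSet.inter ?_ ?_ <;>
    refine MeasurableSet.iInter fun i => MeasurableSet.iInter fun j => ?_
  · by_cases h : i ≤ j
    · simp only [h, forall_true_left]
      exact measurableSet_le (measurable_pi_apply _) (measurable_pi_apply _)
    · simp [h]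
  · by_cases h : i < j ∧ ¬ σ i < σ j
    · have he : {x : Fin d → ℝ | (i < j ∧ ¬ σ i < σ j) → x (σ i) ≠ x (σ j)}
          = {x : Fin d → ℝ | x (σ i) = x (σ j)}ᶜ := by
        ext x; simp only [mem_setOf_eq, mem_compl_iff]; tauto
      rw [he]
      exact (measurableSet_eq_fun (f := fun x : Fin d → ℝ => x (σ i)) (g := fun x => x (σ j)) (measurable_pi_apply _) (measurable_pi_apply _)).compl
    · have he : {x : Fin d → ℝ | (i < j ∧ ¬ σ i < σ j) → x (σ i) ≠ x (σ j)} = univ := by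
        ext x; simp only [mem_setOf_eq, mem_univ, iff_true]; tauto
      rw [he]; exact MeasurableSet.univ

lemma measurable_sortVec {d : ℕ} : Measurable (sortVec (d := d)) := by
  apply measurable_pi_lambda
  intro i
  have : (fun x : Fin d → ℝ => sortVec x i)
      = fun x => ∑ σ : Equiv.Perm (Fin d),
          Set.indicator {x : Fin d → ℝ | σ = Tuple.sort x} (fun x => x (σ i)) x := by
    ext x
    rw [Finset.sum_eq_single (Tuple.sort x)]
    · simp [sortVec, Set.indicator_of_mem, mem_setOf_eq]
    · intro σ _ hσ
      exact Set.indicator_of_notMem (by simpa using hσ) _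
    · simp
  rw [this]
  exact Finset.measurable_sum _ fun σ _ =>
    (measurable_pi_apply _).indicator (measurableSet_sortEq σ)

section Univ
variable (m : Measure ℝ) [IsProbabilityMeasure m]

lemma G_mono : Monotone (fun t => (m (Iic t)).toReal) := fun a b hab =>
  ENNReal.toReal_mono (measure_ne_top m _) (measure_mono (Iic_subset_Iic.2 hab))

lemma Iio_eq_iUnion_aux (c : ℝ) : Iio c = ⋃ n : ℕ, Iic (c - 1/(n+1)) := by
  ext x
  simp only [mem_Iio, mem_iUnion, mem_Iic]
  constructor
  · intro hx
    obtain ⟨n, hn⟩ := exists_nat_one_div_lt (sub_pos.2 hx)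
    exact ⟨n, by linarith⟩
  · rintro ⟨n, hn⟩
    have : (0:ℝ) < 1/(n+1) := by positivity
    linarith

lemma measure_Iio_le {c : ℝ} {B : ℝ≥0∞} (hc : ∀ t < c, m (Iic t) ≤ B) : m (Iio c) ≤ B := by
  rw [Iio_eq_iUnion_aux c]
  rw [Monotone.measure_iUnion]
  · refine iSup_le fun n => hc _ ?_
    have : (0:ℝ) < 1/(n+1) := by positivity
    linarith
  · intro a b hab
    apply Iic_subset_Iic.2
    have : (1:ℝ)/(b+1) ≤ 1/(a+1) := by
      apply one_div_le_one_div_of_le (by positivity) (by exact_mod_cast Nat.succ_le_succ hab)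
    linarith

lemma measure_Iic_le_of_lt (hatom : ∀ t, m {t} = 0) {s : ℝ} {B : ℝ≥0∞}
    (hc : ∀ t < s, m (Iic t) ≤ B) : m (Iic s) ≤ B := by
  have h1 : m (Iic s) ≤ m (Iio s) + m {s} :=
    le_trans (measure_mono (by intro x hx; rcases lt_or_eq_of_le (mem_Iic.1 hx) with h | h
                               exacts [Or.inl h, Or.inr h])) (measure_union_le _ _)
  rw [hatom s, add_zero] at h1
  exact le_trans h1 (measure_Iio_le m hc)

lemma exists_inverse (hatom : ∀ t, m {t} = 0) (h0 : ∀ t < (0:ℝ), m (Iic t) = 0)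
    (h1 : m (Iic 1) = 1) {a : ℝ} (ha : a ∈ Icc (0:ℝ) 1) :
    ∃ s : ℝ, (m (Iic s)).toReal = a ∧
      ∀ t ∈ Icc (-1:ℝ) 1, ((m (Iic t)).toReal ≤ a ↔ t ≤ s) := by
  set S : Set ℝ := {t | t ∈ Icc (-1:ℝ) 1 ∧ (m (Iic t)).toReal ≤ a} with hS
  have hmem : (-1:ℝ) ∈ S := by
    constructor
    · constructor <;> norm_num
    · rw [h0 (-1) (by norm_num)]
      simpa using ha.1
  have hbdd : BddAbove S := ⟨1, fun t ht => ht.1.2⟩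
  set s := sSup S with hs
  have hs1 : s ≤ 1 := csSup_le ⟨_, hmem⟩ fun t ht => ht.1.2
  have hsm1 : (-1:ℝ) ≤ s := le_csSup hbdd hmem
  have hle : (m (Iic s)).toReal ≤ a := by
    have : m (Iic s) ≤ ENNReal.ofReal a := by
      apply measure_Iic_le_of_lt m hatom
      intro t ht
      obtain ⟨t', ht', htt'⟩ := exists_lt_of_lt_csSup ⟨_, hmem⟩ ht
      calc m (Iic t) ≤ m (Iic t') := measure_mono (Iic_subset_Iic.2 htt'.le)
        _ ≤ ENNReal.ofReal a :=
          (ENNReal.le_ofReal_iff_toReal_le (measure_ne_top m _) ha.1).2 ht'.2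
    calc (m (Iic s)).toReal ≤ (ENNReal.ofReal a).toReal := ENNReal.toReal_mono (by simp) this
      _ = a := ENNReal.toReal_ofReal ha.1
  have hge : a ≤ (m (Iic s)).toReal := by
    have hIic : Iic s = ⋂ n : ℕ, Iic (s + 1/(n+1)) := by
      ext x
      simp only [mem_Iic, mem_iInter]
      constructor
      · intro hx n
        have : (0:ℝ) < 1/(n+1) := by positivity
        linarith
      · intro hx
        by_contra hxs
        push_neg at hxs
        obtain ⟨n, hn⟩ := exists_nat_one_div_lt (sub_pos.2 hxs)
        have := hx n
        linarith
    have hmono : Antitone fun n : ℕ => Iic (s + 1/(n+1)) := by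
      intro p q hpq
      apply Iic_subset_Iic.2
      have : (1:ℝ)/(q+1) ≤ 1/(p+1) := by
        apply one_div_le_one_div_of_le (by positivity) (by exact_mod_cast Nat.succ_le_succ hpq)
      linarith
    have hinf : m (Iic s) = ⨅ n : ℕ, m (Iic (s + 1/(n+1))) := by
      rw [hIic]
      exact hmono.measure_iInter (fun n => measurableSet_Iic.nullMeasurableSet)
        ⟨0, measure_ne_top m _⟩
    have hterm : ∀ n : ℕ, ENNReal.ofReal a ≤ m (Iic (s + 1/(n+1))) := by
      intro n
      have hpos : (0:ℝ) < 1/(n+1) := by positivity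
      rcases le_or_gt (s + 1/(n+1)) 1 with h | h
      · have hnot : s + 1/(n+1) ∉ S := fun hmem' =>
          absurd (le_csSup hbdd hmem') (by linarith)
        have : ¬ ((m (Iic (s + 1/(n+1)))).toReal ≤ a) := fun hc =>
          hnot ⟨⟨by linarith, h⟩, hc⟩
        push_neg at this
        exact ENNReal.ofReal_le_of_le_toReal this.le
      · calc ENNReal.ofReal a ≤ ENNReal.ofReal 1 := ENNReal.ofReal_le_ofReal ha.2
          _ = 1 := by norm_num
          _ = m (Iic 1) := h1.symm
          _ ≤ m (Iic (s + 1/(n+1))) := measure_mono (Iic_subset_Iic.2 h.le)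
    have : ENNReal.ofReal a ≤ m (Iic s) := hinf ▸ le_iInf hterm
    exact (ENNReal.ofReal_le_iff_le_toReal (measure_ne_top m _)).1 this
  refine ⟨s, le_antisymm hle hge, fun t ht => ⟨fun hta => le_csSup hbdd ⟨ht, hta⟩, fun hts => ?_⟩⟩
  calc (m (Iic t)).toReal ≤ (m (Iic s)).toReal := G_mono m hts
    _ = a := le_antisymm hle hge

lemma cdf_pos_aux (hatom : ∀ t, m {t} = 0) (h1 : m (Iic 1) = 1) :
    {t : ℝ | (m (Iic t)).toReal ≤ 0} = ∅ ∨
      ∃ c, {t : ℝ | (m (Iic t)).toReal ≤ 0} ⊆ Iic c ∧ m (Iic c) = 0 := by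
  set N := {t : ℝ | (m (Iic t)).toReal ≤ 0} with hN
  have hNiff : ∀ t, t ∈ N ↔ m (Iic t) = 0 := by
    intro t
    simp only [hN, mem_setOf_eq]
    constructor
    · intro h
      have h0 : (m (Iic t)).toReal = 0 := le_antisymm h ENNReal.toReal_nonneg
      rcases ENNReal.toReal_eq_zero_iff _ |>.1 h0 with h' | h'
      · exact h'
      · exact absurd h' (measure_ne_top m _)
    · intro h; simp [h]
  rcases eq_empty_or_nonempty N with h | h
  · exact Or.inl h
  · right
    have hbdd : BddAbove N := by
      refine ⟨1, fun t ht => ?_⟩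
      by_contra hlt
      push_neg at hlt
      have : m (Iic 1) ≤ m (Iic t) := measure_mono (Iic_subset_Iic.2 hlt.le)
      rw [(hNiff t).1 ht, h1] at this
      simp at this
    set c := sSup N with hc
    refine ⟨c, fun t ht => le_csSup hbdd ht, ?_⟩
    have : m (Iic c) ≤ 0 := by
      apply measure_Iic_le_of_lt m hatom
      intro t htc
      obtain ⟨t', ht', htt'⟩ := exists_lt_of_lt_csSup h htc
      calc m (Iic t) ≤ m (Iic t') := measure_mono (Iic_subset_Iic.2 htt'.le)
        _ = 0 := (hNiff t').1 ht'
    exact le_antisymm this (zero_le)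

lemma clamp_iff {w a : ℝ} (h0 : 0 < w) (h1 : w ≤ 1) : w ≤ a ↔ w ≤ max 0 (min a 1) := by
  constructor
  · intro h
    exact le_max_of_le_right (le_min h h1)
  · intro h
    rcases le_or_gt (min a 1) 0 with hm | hm
    · rw [max_eq_left hm] at h; linarith
    · rw [max_eq_right hm.le] at h
      exact h.trans (min_le_left _ _)

end Univ

lemma measurable_boxFn {d : ℕ} (κ : Measure (Fin d → ℝ)) [IsFiniteMeasure κ] :
    Measurable fun a : Fin d → ℝ => (κ {y | ∀ i, y i ≤ a i}).toReal := by
  have hS : MeasurableSet {p : (Fin d → ℝ) × (Fin d → ℝ) | ∀ i, p.2 i ≤ p.1 i} := by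
    have : {p : (Fin d → ℝ) × (Fin d → ℝ) | ∀ i, p.2 i ≤ p.1 i}
        = ⋂ i, {p : (Fin d → ℝ) × (Fin d → ℝ) | p.2 i ≤ p.1 i} := by ext p; simp
    rw [this]
    exact MeasurableSet.iInter fun i => measurableSet_le (by fun_prop) (by fun_prop)
  exact (measurable_measure_prodMk_left (ν := κ) hS).ennreal_toReal

lemma measurableSet_box {d : ℕ} (z : Fin d → ℝ) :
    MeasurableSet {y : Fin d → ℝ | ∀ i, y i ≤ z i} := by
  have : {y : Fin d → ℝ | ∀ i, y i ≤ z i} = ⋂ i, {y : Fin d → ℝ | y i ≤ z i} := by ext y; simp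
  rw [this]
  exact MeasurableSet.iInter fun i => measurableSet_le (measurable_pi_apply i) measurable_const

set_option maxHeartbeats 1000000 in
theorem stmt11 (d : ℕ) (hd : 2 ≤ d) (μ ν : Measure (Fin d → ℝ))
    (hμ : IsCopulaMeasure μ) (hν : IsOrderTransform μ ν) :
    ∫ u, copulaFn ν u ∂ν
      = ∫ u, (μ {v | ∀ i, sortVec v i ≤ sortVec u i}).toReal ∂μ := by
  obtain ⟨hμP, hμmarg⟩ := hμ
  obtain ⟨⟨hνP, hνmarg⟩, hSklar⟩ := hν
  haveI := hμP
  haveI := hνP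
  set ρ : Measure (Fin d → ℝ) := μ.map sortVec with hρdef
  haveI : IsProbabilityMeasure ρ := Measure.isProbabilityMeasure_map measurable_sortVec.aemeasurable
  set mi : Fin d → Measure ℝ := fun i => ρ.map (fun x => x i) with hmidef
  have hmiP : ∀ i, IsProbabilityMeasure (mi i) := fun i =>
    Measure.isProbabilityMeasure_map (measurable_pi_apply i).aemeasurable
  have hmi_apply : ∀ (i) (s : Set ℝ), MeasurableSet s → mi i s = ρ {x | x i ∈ s} := fun i s hs =>
    Measure.map_apply (measurable_pi_apply i) hs
  -- support of μ
  have hμsupp : ∀ᵐ v ∂μ, ∀ i, v i ∈ Icc (0:ℝ) 1 := by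
    rw [ae_all_iff]
    intro i
    rw [ae_iff]
    have he : {v : Fin d → ℝ | ¬ v i ∈ Icc (0:ℝ) 1}
        = (fun v : Fin d → ℝ => v i) ⁻¹' (Icc (0:ℝ) 1)ᶜ := rfl
    rw [he, ← Measure.map_apply (measurable_pi_apply i) measurableSet_Icc.compl, hμmarg i,
      Measure.restrict_apply measurableSet_Icc.compl]
    simp
  -- support of ρ
  have hρsupp : ∀ᵐ x ∂ρ, ∀ i, x i ∈ Icc (0:ℝ) 1 := by
    have hms : MeasurableSet {x : Fin d → ℝ | ∀ i, x i ∈ Icc (0:ℝ) 1} := by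
      have he : {x : Fin d → ℝ | ∀ i, x i ∈ Icc (0:ℝ) 1}
          = ⋂ i, (fun x : Fin d → ℝ => x i) ⁻¹' (Icc (0:ℝ) 1) := by ext x; simp
      rw [he]
      exact MeasurableSet.iInter fun i => (measurable_pi_apply i) measurableSet_Icc
    rw [hρdef, ae_map_iff measurable_sortVec.aemeasurable hms]
    filter_upwards [hμsupp] with v hv i
    exact hv (Tuple.sort v i)
  have hρsupp_null : ρ {x : Fin d → ℝ | ¬ ∀ i, x i ∈ Icc (0:ℝ) 1} = 0 := ae_iff.1 hρsupp
  -- no atoms for marginals of ρ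
  have hatom : ∀ (i) (t : ℝ), mi i {t} = 0 := by
    intro i t
    have h1 : mi i {t} = μ {v | sortVec v i = t} := by
      rw [hmi_apply i {t} (measurableSet_singleton t), hρdef,
        Measure.map_apply measurable_sortVec
          (show MeasurableSet {x : Fin d → ℝ | x i ∈ ({t} : Set ℝ)} from
            (measurable_pi_apply i) (measurableSet_singleton t))]
      rfl
    have h2 : μ (⋃ j, {v : Fin d → ℝ | v j = t}) = 0 := by
      refine le_antisymm (le_trans (measure_iUnion_le _) ?_) (zero_le)
      have hz : ∀ j, μ {v : Fin d → ℝ | v j = t} = 0 := by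
        intro j
        calc μ {v : Fin d → ℝ | v j = t}
            = μ.map (fun v : Fin d → ℝ => v j) {t} :=
              (Measure.map_apply (μ := μ) (measurable_pi_apply j)
                (measurableSet_singleton t)).symm
          _ = volume.restrict (Icc 0 1) {t} := by rw [hμmarg j]
          _ = 0 := by
              rw [Measure.restrict_apply (measurableSet_singleton t)]
              exact measure_mono_null inter_subset_left Real.volume_singleton
      simp [hz]
    rw [h1]
    exact measure_mono_null (fun v hv => mem_iUnion.2 ⟨Tuple.sort v i, hv⟩) h2
  -- marginal CDF vanishes below 0
  have h0m : ∀ i, ∀ t < (0:ℝ), mi i (Iic t) = 0 := by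
    intro i t ht
    rw [hmi_apply i _ measurableSet_Iic]
    refine measure_mono_null ?_ hρsupp_null
    intro x hx hall
    have h1 : x i ≤ t := hx
    linarith [(hall i).1]
  have h1m : ∀ i, mi i (Iic 1) = 1 := by
    intro i
    rw [hmi_apply i _ measurableSet_Iic]
    have hcompl : ρ {x : Fin d → ℝ | x i ∈ Iic (1:ℝ)}ᶜ = 0 := by
      refine measure_mono_null ?_ hρsupp_null
      intro x hx hall
      exact hx ((hall i).2)
    exact (prob_compl_eq_zero_iff ((measurable_pi_apply i) measurableSet_Iic)).1 hcompl
  -- a.e. positivity of margCDF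
  have hpos : ∀ᵐ x ∂ρ, ∀ i, 0 < margCDF ρ i (x i) := by
    rw [ae_all_iff]
    intro i
    rw [ae_iff]
    have hset : {x : Fin d → ℝ | ¬ 0 < margCDF ρ i (x i)}
        = {x | x i ∈ {t : ℝ | (mi i (Iic t)).toReal ≤ 0}} := by
      ext x; simp [not_lt, margCDF, hmidef]
    rw [hset]
    haveI := hmiP i
    rcases cdf_pos_aux (mi i) (hatom i) (h1m i) with h | ⟨c, hsub, hc⟩
    · rw [h]
      simp
    · have hnull : ρ {x : Fin d → ℝ | x i ∈ Iic c} = 0 := by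
        rw [← hmi_apply i (Iic c) measurableSet_Iic]
        exact hc
      exact measure_mono_null (fun x hx => hsub hx) hnull
  have hle1 : ∀ (i) (t : ℝ), margCDF ρ i t ≤ 1 := by
    intro i t
    haveI := hmiP i
    have h1 : mi i (Iic t) ≤ 1 := prob_le_one
    calc margCDF ρ i t = (mi i (Iic t)).toReal := rfl
      _ ≤ (1:ℝ≥0∞).toReal := ENNReal.toReal_mono (by simp) h1
      _ = 1 := by simp
  -- ν a.e. bounds
  have hνae : ∀ᵐ w ∂ν, ∀ i, 0 < w i ∧ w i ≤ 1 := by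
    rw [ae_all_iff]
    intro i
    have h01 : ν {w : Fin d → ℝ | w i ≤ 0} = 0 := by
      rw [show {w : Fin d → ℝ | w i ≤ 0} = (fun w : Fin d → ℝ => w i) ⁻¹' (Iic 0) from rfl,
        ← Measure.map_apply (measurable_pi_apply i) measurableSet_Iic, hνmarg i,
        Measure.restrict_apply measurableSet_Iic]
      have he : Iic (0:ℝ) ∩ Icc 0 1 = {0} := by
        ext x
        simp only [mem_inter_iff, mem_Iic, mem_Icc, mem_singleton_iff]
        constructor
        · rintro ⟨hx1, hx2, _⟩; linarith
        · rintro rfl; norm_num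
      rw [he]
      exact Real.volume_singleton
    have h11 : ν {w : Fin d → ℝ | 1 < w i} = 0 := by
      rw [show {w : Fin d → ℝ | 1 < w i} = (fun w : Fin d → ℝ => w i) ⁻¹' (Ioi 1) from rfl,
        ← Measure.map_apply (measurable_pi_apply i) measurableSet_Ioi, hνmarg i,
        Measure.restrict_apply measurableSet_Ioi]
      have he : Ioi (1:ℝ) ∩ Icc 0 1 = ∅ := by
        ext x
        simp only [mem_inter_iff, mem_Ioi, mem_Icc, mem_empty_iff_false, iff_false, not_and]
        intro hx1 hx2
        linarith [hx2]
      rw [he]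
      exact measure_empty
    rw [ae_iff]
    refine measure_mono_null (fun w hw => ?_)
      (le_antisymm (le_trans (measure_union_le {w : Fin d → ℝ | w i ≤ 0} {w | 1 < w i})
        (by rw [h01, h11]; simp)) (zero_le))
    simp only [mem_setOf_eq, not_and_or, not_lt, not_le] at hw
    rcases hw with h | h
    exacts [Or.inl h, Or.inr h]
  -- key identity on boxes
  have hkey : ∀ a : Fin d → ℝ,
      ν {w | ∀ i, w i ≤ a i} = ρ {x | ∀ i, margCDF ρ i (x i) ≤ a i} := by
    intro a
    set a' : Fin d → ℝ := fun i => max 0 (min (a i) 1) with ha'def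
    have ha'mem : ∀ i, a' i ∈ Icc (0:ℝ) 1 := fun i =>
      ⟨le_max_left _ _, max_le (by norm_num) (min_le_right _ _)⟩
    have hν1 : ν {w | ∀ i, w i ≤ a i} = ν {w | ∀ i, w i ≤ a' i} := by
      apply measure_congr
      rw [Filter.eventuallyEq_set]
      filter_upwards [hνae] with w hw
      exact forall_congr' fun i => clamp_iff (hw i).1 (hw i).2
    have hρ1 : ρ {x | ∀ i, margCDF ρ i (x i) ≤ a i}
        = ρ {x | ∀ i, margCDF ρ i (x i) ≤ a' i} := by
      apply measure_congr
      rw [Filter.eventuallyEq_set]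
      filter_upwards [hpos] with x hx
      exact forall_congr' fun i => clamp_iff (hx i) (hle1 i (x i))
    have hinv : ∀ i, ∃ s : ℝ, ((mi i) (Iic s)).toReal = a' i ∧
        ∀ t ∈ Icc (-1:ℝ) 1, (((mi i) (Iic t)).toReal ≤ a' i ↔ t ≤ s) := by
      intro i
      haveI := hmiP i
      exact exists_inverse (mi i) (hatom i) (h0m i) (h1m i) (ha'mem i)
    choose s hs hiff using hinv
    have hρ2 : ρ {x | ∀ i, margCDF ρ i (x i) ≤ a' i} = ρ {x | ∀ i, x i ≤ s i} := by
      apply measure_congr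
      rw [Filter.eventuallyEq_set]
      filter_upwards [hρsupp] with x hx
      refine forall_congr' fun i => ?_
      exact hiff i (x i) ⟨by linarith [(hx i).1], (hx i).2⟩
    have hsklar := hSklar s
    have hfs : (fun i => margCDF ρ i (s i)) = a' := funext fun i => hs i
    rw [hfs] at hsklar
    have hfin : ρ {x | ∀ i, x i ≤ s i} = ν {w | ∀ i, w i ≤ a' i} :=
      (ENNReal.toReal_eq_toReal_iff' (measure_ne_top _ _) (measure_ne_top _ _)).1 hsklar
    rw [hν1, hρ1, hρ2, hfin]
  -- F is measurable
  have hGmono : ∀ i, Monotone (margCDF ρ i) := by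
    intro i
    haveI := hmiP i
    exact G_mono (mi i)
  have hF : Measurable (fun x : Fin d → ℝ => fun i => margCDF ρ i (x i)) :=
    measurable_pi_lambda _ fun i => ((hGmono i).measurable).comp (measurable_pi_apply i)
  -- ν is the pushforward of ρ under F
  have hmapF : ν = ρ.map (fun x => fun i => margCDF ρ i (x i)) := by
    haveI : IsProbabilityMeasure (ρ.map (fun x => fun i => margCDF ρ i (x i))) :=
      Measure.isProbabilityMeasure_map hF.aemeasurable
    refine ext_of_generate_finite
      (Set.pi univ '' Set.pi univ (fun _ : Fin d => range (Iic : ℝ → Set ℝ))) ?_ ?_ ?_ ?_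
    · refine (generateFrom_eq_pi (fun _ => ?_) (fun _ => ?_)).symm
      · exact (BorelSpace.measurable_eq.trans (borel_eq_generateFrom_Iic ℝ)).symm
      · refine ⟨fun n => Iic (n:ℝ), fun n => mem_range_self _, ?_⟩
        rw [eq_univ_iff_forall]
        intro x
        obtain ⟨n, hn⟩ := exists_nat_ge x
        exact mem_iUnion.2 ⟨n, hn⟩
    · exact IsPiSystem.pi fun _ => isPiSystem_Iic
    · rintro t ⟨t', ht', rfl⟩
      have hael := fun i => ht' i (mem_univ i)
      choose a ha using hael
      have hbox' : Set.pi univ t' = {w : Fin d → ℝ | ∀ i, w i ≤ a i} := by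
        ext w
        simp only [mem_pi, mem_univ, forall_true_left, mem_setOf_eq]
        refine forall_congr' fun i => ?_
        rw [← ha i]
        rfl
      rw [hbox', hkey a, Measure.map_apply hF (measurableSet_box a)]
      rfl
    · simp
  -- conclusion
  calc ∫ u, copulaFn ν u ∂ν
      = ∫ u, copulaFn ν u ∂(ρ.map (fun x => fun i => margCDF ρ i (x i))) := by rw [← hmapF]
    _ = ∫ x, copulaFn ν (fun i => margCDF ρ i (x i)) ∂ρ :=
        integral_map hF.aemeasurable
          (show Measurable (copulaFn ν) from measurable_boxFn ν).aestronglyMeasurable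
    _ = ∫ x, (ρ {y | ∀ i, y i ≤ x i}).toReal ∂ρ :=
        integral_congr_ae (Filter.Eventually.of_forall fun x => (hSklar x).symm)
    _ = ∫ u, (ρ {y | ∀ i, y i ≤ sortVec u i}).toReal ∂μ := by
        rw [hρdef]
        exact integral_map measurable_sortVec.aemeasurable
          (measurable_boxFn (μ.map sortVec)).aestronglyMeasurable
    _ = ∫ u, (μ {v | ∀ i, sortVec v i ≤ sortVec u i}).toReal ∂μ := by
        refine integral_congr_ae (Filter.Eventually.of_forall fun u => ?_)
        show ((μ.map sortVec) {y | ∀ i, y i ≤ sortVec u i}).toReal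
            = (μ {v | ∀ i, sortVec v i ≤ sortVec u i}).toReal
        rw [Measure.map_apply measurable_sortVec (measurableSet_box (sortVec u))]
        rfl
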